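/- For all integers n, h, k: P(n+h)·Q(n+k) − P(n)·Q(n+h+k) = (−1)^n · P(h)·Q(k), where (−1)^n denotes the integer power (−1)^n extended to integer exponents (equal to 1 for even n and −1 for odd n). -/

import Mathlib

/-- Uniqueness: two functions satisfying the Pell recurrence on all of `ℤ`
that agree at `0` and `1` are equal. -/
lemma pell_uniq (f g : ℤ → ℤ)
    (hf : ∀ m : ℤ, f (m + 2) = 2 * f (m + 1) + f m)
    (hg : ∀ m : ℤ, g (m + 2) = 2 * g (m + 1) + g m)
    (h0 : f 0 = g 0) (h1 : f 1 = g 1) : ∀ m : ℤ, f m = g m := by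
  have key : ∀ m : ℤ, f m = g m ∧ f (m + 1) = g (m + 1) := by
    intro m
    induction m using Int.induction_on with
    | zero => exact ⟨h0, by simpa using h1⟩
    | succ i ih =>
      refine ⟨ih.2, ?_⟩
      have e : (i : ℤ) + 1 + 1 = i + 2 := by ring
      rw [e, hf i, hg i, ih.1, ih.2]
    | pred i ih =>
      refine ⟨?_, by simpa using ih.1⟩
      have hfi := hf (-(i : ℤ) - 1)
      have hgi := hg (-(i : ℤ) - 1)
      have e1 : (-(i : ℤ) - 1) + 2 = -(i : ℤ) + 1 := by ring
      have e2 : (-(i : ℤ) - 1) + 1 = -(i : ℤ) := by ring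
      rw [e1, e2] at hfi hgi
      linarith [ih.1, ih.2, hfi, hgi]
  exact fun m => (key m).1

/-- `P(n+h)·Q(n+k) − P(n)·Q(n+h+k) = (−1)^n·P(h)·Q(k)` for Pell `P` and
Pell–Lucas `Q` extended to all integers. -/
theorem stmt_12 (P Q : ℤ → ℤ)
    (hP0 : P 0 = 0) (hP1 : P 1 = 1)
    (hP : ∀ n : ℤ, P n = 2 * P (n - 1) + P (n - 2))
    (hQ0 : Q 0 = 2) (hQ1 : Q 1 = 1)
    (hQ : ∀ n : ℤ, Q n = 2 * Q (n - 1) + Q (n - 2))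
    (n h k : ℤ) :
    P (n + h) * Q (n + k) - P n * Q (n + h + k)
      = (n.negOnePow : ℤ) * P h * Q k := by
  have hP2 : ∀ m : ℤ, P (m + 2) = 2 * P (m + 1) + P m := by
    intro m
    have := hP (m + 2)
    simpa [show m + 2 - 1 = m + 1 from by ring, show m + 2 - 2 = m from by ring]
      using this
  have hQ2 : ∀ m : ℤ, Q (m + 2) = 2 * Q (m + 1) + Q m := by
    intro m
    have := hQ (m + 2)
    simpa [show m + 2 - 1 = m + 1 from by ring, show m + 2 - 2 = m from by ring]
      using this
  -- negOnePow step lemmas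
  have npS : ∀ m : ℤ, (((m + 1).negOnePow : ℤˣ) : ℤ) = -((m.negOnePow : ℤˣ) : ℤ) := by
    intro m; rw [Int.negOnePow_succ]; simp
  have npP : ∀ m : ℤ, (((m - 1).negOnePow : ℤˣ) : ℤ) = -((m.negOnePow : ℤˣ) : ℤ) := by
    intro m
    have := npS (m - 1)
    rw [show m - 1 + 1 = m from by ring] at this
    linarith
  -- lemA : P(m+1)Q(m) − P(m)Q(m+1) = 2·(−1)^m
  have lemA : ∀ m : ℤ, P (m + 1) * Q m - P m * Q (m + 1)
      = 2 * (m.negOnePow : ℤ) := by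
    intro m
    induction m using Int.induction_on with
    | zero => simp [hP0, hP1, hQ0, hQ1]
    | succ i ih =>
      have e : (i : ℤ) + 1 + 1 = i + 2 := by ring
      rw [e, npS i]
      linear_combination Q ((i : ℤ) + 1) * hP2 i - P ((i : ℤ) + 1) * hQ2 i - ih
    | pred i ih =>
      have e : -(i : ℤ) - 1 + 1 = -(i : ℤ) := by ring
      have np : (((-(i : ℤ) - 1).negOnePow : ℤˣ) : ℤ)
          = -(((-(i : ℤ)).negOnePow : ℤˣ) : ℤ) := npP (-(i : ℤ))
      rw [e, np]
      have h1 := hP2 (-(i : ℤ) - 1)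
      have h2 := hQ2 (-(i : ℤ) - 1)
      rw [show -(i : ℤ) - 1 + 2 = -(i : ℤ) + 1 from by ring,
          show -(i : ℤ) - 1 + 1 = -(i : ℤ) from by ring] at h1 h2
      linear_combination Q (-(i : ℤ)) * h1 - P (-(i : ℤ)) * h2 - ih
  -- lemB : P(m+1)Q(m+1) − P(m)Q(m+2) = (−1)^m
  have lemB : ∀ m : ℤ, P (m + 1) * Q (m + 1) - P m * Q (m + 2)
      = (m.negOnePow : ℤ) := by
    intro m
    induction m using Int.induction_on with
    | zero =>
      have := hQ2 0
      simp only [zero_add] at this ⊢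
      simp [hP0, hP1, hQ1]
    | succ i ih =>
      rw [show (i : ℤ) + 1 + 1 = i + 2 from by ring,
          show (i : ℤ) + 1 + 2 = i + 3 from by ring, npS i]
      have h1 := hP2 i
      have h2 := hQ2 ((i : ℤ) + 1)
      rw [show (i : ℤ) + 1 + 2 = i + 3 from by ring,
          show (i : ℤ) + 1 + 1 = i + 2 from by ring] at h2
      linear_combination Q ((i : ℤ) + 2) * h1 - P ((i : ℤ) + 1) * h2 - ih
    | pred i ih =>
      rw [show -(i : ℤ) - 1 + 1 = -(i : ℤ) from by ring,
          show -(i : ℤ) - 1 + 2 = -(i : ℤ) + 1 from by ring, npP (-(i : ℤ))]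
      have h1 := hP2 (-(i : ℤ) - 1)
      have h2 := hQ2 (-(i : ℤ))
      rw [show -(i : ℤ) - 1 + 2 = -(i : ℤ) + 1 from by ring,
          show -(i : ℤ) - 1 + 1 = -(i : ℤ) from by ring] at h1
      linear_combination Q (-(i : ℤ) + 1) * h1 - P (-(i : ℤ)) * h2 - ih
  -- lemC : P(n+1)Q(n+k) − P(n)Q(n+k+1) = (−1)^n·Q(k), by uniqueness in k
  have lemC : ∀ m : ℤ, P (n + 1) * Q (n + m) - P n * Q (n + m + 1)
      = (n.negOnePow : ℤ) * Q m := by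
    refine pell_uniq
      (fun m => P (n + 1) * Q (n + m) - P n * Q (n + m + 1))
      (fun m => (n.negOnePow : ℤ) * Q m) ?_ ?_ ?_ ?_
    · intro m
      show P (n + 1) * Q (n + (m + 2)) - P n * Q (n + (m + 2) + 1)
        = 2 * (P (n + 1) * Q (n + (m + 1)) - P n * Q (n + (m + 1) + 1))
          + (P (n + 1) * Q (n + m) - P n * Q (n + m + 1))
      rw [show n + (m + 2) = n + m + 2 from by ring,
          show n + m + 2 + 1 = n + m + 3 from by ring,
          show n + (m + 1) = n + m + 1 from by ring,
          show n + m + 1 + 1 = n + m + 2 from by ring]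
      have h1 := hQ2 (n + m)
      have h2 := hQ2 (n + m + 1)
      rw [show n + m + 1 + 2 = n + m + 3 from by ring,
          show n + m + 1 + 1 = n + m + 2 from by ring] at h2
      linear_combination P (n + 1) * h1 - P n * h2
    · intro m
      show (n.negOnePow : ℤ) * Q (m + 2)
        = 2 * ((n.negOnePow : ℤ) * Q (m + 1)) + (n.negOnePow : ℤ) * Q m
      linear_combination (n.negOnePow : ℤ) * hQ2 m
    · show P (n + 1) * Q (n + 0) - P n * Q (n + 0 + 1) = (n.negOnePow : ℤ) * Q 0
      rw [show n + 0 = n from by ring, hQ0]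
      linear_combination lemA n
    · show P (n + 1) * Q (n + 1) - P n * Q (n + 1 + 1) = (n.negOnePow : ℤ) * Q 1
      rw [show n + 1 + 1 = n + 2 from by ring, hQ1]
      linear_combination lemB n
  -- final: uniqueness in h
  have final : ∀ m : ℤ, P (n + m) * Q (n + k) - P n * Q (n + m + k)
      = (n.negOnePow : ℤ) * P m * Q k := by
    refine pell_uniq
      (fun m => P (n + m) * Q (n + k) - P n * Q (n + m + k))
      (fun m => (n.negOnePow : ℤ) * P m * Q k) ?_ ?_ ?_ ?_
    · intro m
      show P (n + (m + 2)) * Q (n + k) - P n * Q (n + (m + 2) + k)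
        = 2 * (P (n + (m + 1)) * Q (n + k) - P n * Q (n + (m + 1) + k))
          + (P (n + m) * Q (n + k) - P n * Q (n + m + k))
      rw [show n + (m + 2) = n + m + 2 from by ring,
          show n + m + 2 + k = n + m + k + 2 from by ring,
          show n + (m + 1) = n + m + 1 from by ring,
          show n + m + 1 + k = n + m + k + 1 from by ring]
      have h1 := hP2 (n + m)
      have h2 := hQ2 (n + m + k)
      linear_combination Q (n + k) * h1 - P n * h2
    · intro m
      show (n.negOnePow : ℤ) * P (m + 2) * Q k
        = 2 * ((n.negOnePow : ℤ) * P (m + 1) * Q k) + (n.negOnePow : ℤ) * P m * Q k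
      linear_combination Q k * (n.negOnePow : ℤ) * hP2 m
    · show P (n + 0) * Q (n + k) - P n * Q (n + 0 + k) = (n.negOnePow : ℤ) * P 0 * Q k
      rw [show n + 0 = n from by ring, hP0]
      ring
    · show P (n + 1) * Q (n + k) - P n * Q (n + 1 + k) = (n.negOnePow : ℤ) * P 1 * Q k
      rw [hP1, show n + 1 + k = n + k + 1 from by ring]
      linear_combination lemC k
  exact final h
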